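/- For every m > 0, the inverse function r_m : [0, ∞) → [r₀(m), ∞) of s_m satisfies: r_m(0) = r₀(m); r_m is differentiable on (0, ∞) with r_m′(s) = √(1 + r_m(s)² − 2m/r_m(s)) > 0; r_m is twice differentiable on (0, ∞) with r_m″(s) = r_m(s) + m/r_m(s)²; and the one-sided derivative of r_m at s = 0 exists and equals 0. -/

import Mathlib

open MeasureTheory Filter Topology

/-- The arclength function `s_m(r) = ∫_{r₀}^{r} (1 + t² − 2m/t)^{−1/2} dt`, the
`g_m`-distance from the coordinate sphere `S_r` to the boundary sphere `S_{r₀}` in the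
Schwarzschild anti-de Sitter space of mass `m`. -/
noncomputable def sm (m r₀ r : ℝ) : ℝ :=
  ∫ t in Set.Ioc r₀ r, (Real.sqrt (1 + t ^ 2 - 2 * m / t))⁻¹

/-- Auxiliary: the integrand of `sm`. -/
noncomputable def smIntegrand (m t : ℝ) : ℝ := (Real.sqrt (1 + t ^ 2 - 2 * m / t))⁻¹

lemma smIntegrand_meas (m : ℝ) : Measurable (smIntegrand m) := by
  unfold smIntegrand; fun_prop

lemma smIntegrand_nonneg (m t : ℝ) : 0 ≤ smIntegrand m t :=
  inv_nonneg.2 (Real.sqrt_nonneg _)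

section aux

variable {m r₀ : ℝ} (hm : 0 < m) (hr₀ : 0 < r₀) (hroot : r₀ ^ 3 + r₀ = 2 * m)
include hm hr₀ hroot

lemma aux_pos {t : ℝ} (ht : r₀ < t) : 0 < 1 + t ^ 2 - 2 * m / t := by
  have ht0 : 0 < t := hr₀.trans ht
  have h : 2 * m / t < 1 + t ^ 2 := by
    rw [div_lt_iff₀ ht0]
    nlinarith [mul_pos (mul_pos hr₀ hr₀) hr₀, sq_nonneg (t + r₀), sq_nonneg (t - r₀),
      mul_pos hr₀ ht0]
  linarith

lemma aux_mono {a b : ℝ} (ha : r₀ ≤ a) (hab : a ≤ b) :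
    1 + a ^ 2 - 2 * m / a ≤ 1 + b ^ 2 - 2 * m / b := by
  have ha0 : 0 < a := hr₀.trans_le ha
  have hb0 : 0 < b := ha0.trans_le hab
  have h1 : a ^ 2 ≤ b ^ 2 := by nlinarith
  have h2 : 2 * m / b ≤ 2 * m / a :=
    div_le_div_of_nonneg_left (by linarith) ha0 hab
  linarith

lemma smIntegrand_pos {t : ℝ} (ht : r₀ < t) : 0 < smIntegrand m t :=
  inv_pos.2 (Real.sqrt_pos.2 (aux_pos hm hr₀ hroot ht))

lemma smIntegrand_contAt {t : ℝ} (ht : r₀ < t) : ContinuousAt (smIntegrand m) t := by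
  have ht0 : 0 < t := hr₀.trans ht
  have h1 : ContinuousAt (fun t : ℝ => 1 + t ^ 2 - 2 * m / t) t :=
    (continuousAt_const.add (continuousAt_id.pow 2)).sub
      (continuousAt_const.div continuousAt_id ht0.ne')
  exact (Real.continuous_sqrt.continuousAt.comp h1).inv₀
    (ne_of_gt (Real.sqrt_pos.2 (aux_pos hm hr₀ hroot ht)))

lemma smIntegrand_anti {a b : ℝ} (ha : r₀ < a) (hab : a ≤ b) :
    smIntegrand m b ≤ smIntegrand m a := by
  have h1 := aux_pos hm hr₀ hroot ha
  have h2 := aux_mono hm hr₀ hroot ha.le hab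
  exact inv_anti₀ (Real.sqrt_pos.2 h1) (Real.sqrt_le_sqrt h2)

end aux

/-- For every `m > 0`, the inverse function `r_m : [0,∞) → [r₀(m),∞)` of
`s_m` satisfies: `r_m(0) = r₀(m)`; `r_m` is differentiable on `(0,∞)` with
`r_m′(s) = √(1 + r_m(s)² − 2m/r_m(s)) > 0`; `r_m` is twice differentiable on `(0,∞)` with
`r_m″(s) = r_m(s) + m/r_m(s)²`; and the one-sided derivative of `r_m` at `s = 0` exists
and equals `0`.  Here `r₀` is the unique positive real with `r₀³ + r₀ = 2m`, and the
inverse relationship is expressed by the hypotheses `hinv₁`, `hinv₂`. -/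
theorem penrose_stmt8 (m r₀ : ℝ) (hm : 0 < m) (hr₀ : 0 < r₀)
    (hroot : r₀ ^ 3 + r₀ = 2 * m) (rm : ℝ → ℝ)
    (hinv₁ : ∀ r : ℝ, r₀ ≤ r → rm (sm m r₀ r) = r)
    (hinv₂ : ∀ s : ℝ, 0 ≤ s → r₀ ≤ rm s ∧ sm m r₀ (rm s) = s) :
    rm 0 = r₀ ∧
    (∀ s : ℝ, 0 < s →
      HasDerivAt rm (Real.sqrt (1 + (rm s) ^ 2 - 2 * m / rm s)) s ∧
      0 < Real.sqrt (1 + (rm s) ^ 2 - 2 * m / rm s)) ∧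
    (∀ s : ℝ, 0 < s → HasDerivAt (deriv rm) (rm s + m / (rm s) ^ 2) s) ∧
    HasDerivWithinAt rm 0 (Set.Ici 0) 0 := by
  have hsm_def : ∀ r, sm m r₀ r = ∫ t in Set.Ioc r₀ r, smIntegrand m t := fun r => rfl
  have hsm0 : sm m r₀ r₀ = 0 := by
    rw [hsm_def, Set.Ioc_self, Measure.restrict_empty, integral_zero_measure]
  have hrm0 : rm 0 = r₀ := by
    have := hinv₁ r₀ le_rfl
    rwa [hsm0] at this
  have hsm_nonneg : ∀ r, 0 ≤ sm m r₀ r := by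
    intro r
    rw [hsm_def]
    exact setIntegral_nonneg measurableSet_Ioc fun t _ => smIntegrand_nonneg m t
  -- integrability
  have hInt : ∀ r, r₀ ≤ r → IntegrableOn (smIntegrand m) (Set.Ioc r₀ r) := by
    intro r hr
    rcases eq_or_lt_of_le hr with h | h
    · subst h; simp [Set.Ioc_self]
    · by_contra hni
      have h0 : sm m r₀ r = 0 := by rw [hsm_def]; exact integral_undef hni
      have h1 := hinv₁ r hr
      rw [h0, hrm0] at h1
      exact absurd h1 (ne_of_lt h)
  -- splitting
  have hsplit : ∀ a b, r₀ ≤ a → a ≤ b →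
      sm m r₀ b = sm m r₀ a + ∫ t in Set.Ioc a b, smIntegrand m t := by
    intro a b ha hab
    have h1 : IntegrableOn (smIntegrand m) (Set.Ioc r₀ b) := hInt b (ha.trans hab)
    have h2 : IntegrableOn (smIntegrand m) (Set.Ioc r₀ a) :=
      h1.mono_set (Set.Ioc_subset_Ioc_right hab)
    have h3 : IntegrableOn (smIntegrand m) (Set.Ioc a b) :=
      h1.mono_set (Set.Ioc_subset_Ioc_left ha)
    rw [hsm_def, hsm_def, ← Set.Ioc_union_Ioc_eq_Ioc ha hab,
      setIntegral_union (Set.Ioc_disjoint_Ioc_of_le le_rfl) measurableSet_Ioc h2 h3]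
  -- monotonicity of sm
  have hmono : ∀ a b, r₀ ≤ a → a ≤ b → sm m r₀ a ≤ sm m r₀ b := by
    intro a b ha hab
    rw [hsplit a b ha hab]
    have : 0 ≤ ∫ t in Set.Ioc a b, smIntegrand m t :=
      setIntegral_nonneg measurableSet_Ioc fun t _ => smIntegrand_nonneg m t
    linarith
  have hstrict : ∀ a b, r₀ ≤ a → a < b → sm m r₀ a < sm m r₀ b := by
    intro a b ha hab
    rw [hsplit a b ha hab.le]
    have hb : r₀ < b := ha.trans_lt hab
    have hpos : 0 < ∫ t in Set.Ioc a b, smIntegrand m t := by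
      have hc : 0 < smIntegrand m b := smIntegrand_pos hm hr₀ hroot hb
      have hle : ∀ t ∈ Set.Ioc a b, smIntegrand m b ≤ smIntegrand m t := fun t ht =>
        smIntegrand_anti hm hr₀ hroot (ha.trans_lt ht.1) ht.2
      have hvol : (volume (Set.Ioc a b)).toReal = b - a := by
        rw [Real.volume_Ioc, ENNReal.toReal_ofReal (by linarith)]
      calc (0:ℝ) < smIntegrand m b * (volume (Set.Ioc a b)).toReal := by
            rw [hvol]; exact mul_pos hc (by linarith)
        _ ≤ _ := setIntegral_ge_of_const_le_real measurableSet_Ioc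
            (by rw [Real.volume_Ioc]; exact ENNReal.ofReal_ne_top) hle
            ((hInt b hb.le).mono_set (Set.Ioc_subset_Ioc_left ha))
    linarith
  -- strict monotonicity of rm
  have hrm_mono : ∀ u v, 0 ≤ u → u < v → rm u < rm v := by
    intro u v hu huv
    by_contra hle
    push_neg at hle
    have h1 := hinv₂ u hu
    have h2 := hinv₂ v (hu.trans huv.le)
    have := hmono (rm v) (rm u) h2.1 hle
    rw [h1.2, h2.2] at this
    linarith
  have hrm_gt : ∀ s, 0 < s → r₀ < rm s := by
    intro s hs
    have := hrm_mono 0 s le_rfl hs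
    rwa [hrm0] at this
  -- continuity of rm on (0, ∞)
  have hrm_cont : ∀ s, 0 < s → ContinuousAt rm s := by
    intro s hs
    have h2 := hinv₂ s hs.le
    have hrs : r₀ < rm s := hrm_gt s hs
    rw [Metric.continuousAt_iff]
    intro ε hε
    set ε' : ℝ := min (ε / 2) ((rm s - r₀) / 2) with hε'def
    have hε' : 0 < ε' := lt_min (by linarith) (by linarith)
    have hε'ε : ε' < ε := (min_le_left _ _).trans_lt (by linarith)
    have hlow : r₀ ≤ rm s - ε' := by
      have := min_le_right (ε / 2) ((rm s - r₀) / 2)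
      rw [← hε'def] at this
      linarith
    set s₁ := sm m r₀ (rm s - ε') with hs₁def
    set s₂ := sm m r₀ (rm s + ε') with hs₂def
    have hs₁ : s₁ < s := by
      have := hstrict (rm s - ε') (rm s) hlow (by linarith)
      rwa [h2.2] at this
    have hs₂ : s < s₂ := by
      have := hstrict (rm s) (rm s + ε') h2.1 (by linarith)
      rwa [h2.2] at this
    refine ⟨min (s - s₁) (s₂ - s), lt_min (by linarith) (by linarith), ?_⟩
    intro x hx
    rw [Real.dist_eq] at hx
    have hx1 : s₁ < x := by
      have := abs_lt.1 hx
      have h := (min_le_left (s - s₁) (s₂ - s))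
      linarith [this.1]
    have hx2 : x < s₂ := by
      have := abs_lt.1 hx
      have h := (min_le_right (s - s₁) (s₂ - s))
      linarith [this.2]
    have hs₁0 : 0 ≤ s₁ := hsm_nonneg _
    have hrx1 : rm s - ε' < rm x := by
      have := hrm_mono s₁ x hs₁0 hx1
      rwa [hs₁def, hinv₁ _ hlow] at this
    have hrx2 : rm x < rm s + ε' := by
      have := hrm_mono x s₂ (hs₁0.trans hx1.le) hx2
      rwa [hs₂def, hinv₁ _ (by linarith)] at this
    rw [Real.dist_eq, abs_lt]
    constructor <;> linarith
  -- derivative of sm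
  have hsm_deriv : ∀ r, r₀ < r → HasDerivAt (sm m r₀) (smIntegrand m r) r := by
    intro r hr
    have hii : IntervalIntegrable (smIntegrand m) volume r₀ r :=
      (intervalIntegrable_iff_integrableOn_Ioc_of_le hr.le).2 (hInt r hr.le)
    have hmeas : StronglyMeasurableAtFilter (smIntegrand m) (𝓝 r) volume :=
      (smIntegrand_meas m).stronglyMeasurable.stronglyMeasurableAtFilter
    have h1 : HasDerivAt (fun u => ∫ t in r₀..u, smIntegrand m t) (smIntegrand m r) r :=
      intervalIntegral.integral_hasDerivAt_right hii hmeas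
        (smIntegrand_contAt hm hr₀ hroot hr)
    apply h1.congr_of_eventuallyEq
    filter_upwards [eventually_gt_nhds hr] with u hu
    rw [hsm_def, intervalIntegral.integral_of_le hu.le]
  -- main derivative of rm
  have hmain : ∀ s, 0 < s →
      HasDerivAt rm (Real.sqrt (1 + (rm s) ^ 2 - 2 * m / rm s)) s := by
    intro s hs
    have hrs : r₀ < rm s := hrm_gt s hs
    have hF := hsm_deriv (rm s) hrs
    have hfg : ∀ᶠ y in 𝓝 s, sm m r₀ (rm y) = y := by
      filter_upwards [eventually_gt_nhds hs] with y hy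
      exact (hinv₂ y hy.le).2
    have h := HasDerivAt.of_local_left_inverse (hrm_cont s hs) hF
      (ne_of_gt (smIntegrand_pos hm hr₀ hroot hrs)) hfg
    simpa [smIntegrand] using h
  have hFpos : ∀ s, 0 < s → 0 < Real.sqrt (1 + (rm s) ^ 2 - 2 * m / rm s) := fun s hs =>
    Real.sqrt_pos.2 (aux_pos hm hr₀ hroot (hrm_gt s hs))
  -- second derivative
  have hsecond : ∀ s, 0 < s → HasDerivAt (deriv rm) (rm s + m / (rm s) ^ 2) s := by
    intro s hs
    have hrs : r₀ < rm s := hrm_gt s hs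
    have hrs0 : (0:ℝ) < rm s := hr₀.trans hrs
    have hrm' := hmain s hs
    set D := Real.sqrt (1 + (rm s) ^ 2 - 2 * m / rm s) with hD
    have h1 : HasDerivAt (fun u => rm u ^ 2) (2 * rm s * D) s := by
      have := hrm'.fun_pow 2
      simpa [mul_comm, mul_assoc, mul_left_comm] using this
    have h2 : HasDerivAt (fun u => 2 * m / rm u) (-(2 * m * D) / rm s ^ 2) s := by
      have := (hasDerivAt_const s (2 * m)).fun_div hrm' (ne_of_gt hrs0)
      rw [show -(2 * m * D) / rm s ^ 2 = (0 * rm s - 2 * m * D) / rm s ^ 2 by ring]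
      exact this
    have hψ : HasDerivAt (fun u => 1 + rm u ^ 2 - 2 * m / rm u)
        (2 * rm s * D - -(2 * m * D) / rm s ^ 2) s := by
      have := ((hasDerivAt_const s (1:ℝ)).add h1).sub h2
      rwa [zero_add] at this
    have hf_pos : 0 < 1 + (rm s) ^ 2 - 2 * m / rm s := aux_pos hm hr₀ hroot hrs
    have hφ := hψ.sqrt (ne_of_gt hf_pos)
    have hval : (2 * rm s * D - -(2 * m * D) / rm s ^ 2) /
        (2 * Real.sqrt (1 + rm s ^ 2 - 2 * m / rm s)) = rm s + m / (rm s) ^ 2 := by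
      rw [← hD]
      have hDpos : 0 < D := hFpos s hs
      field_simp
      ring
    rw [hval] at hφ
    apply hφ.congr_of_eventuallyEq
    filter_upwards [eventually_gt_nhds hs] with u hu
    exact (hmain u hu).deriv
  refine ⟨hrm0, fun s hs => ⟨hmain s hs, hFpos s hs⟩, hsecond, ?_⟩
  -- one-sided derivative at 0
  have hc0 : ∀ η, 0 < η → ∃ δ, 0 < δ ∧ ∀ u, 0 ≤ u → u < δ → rm u < r₀ + η := by
    intro η hη
    refine ⟨sm m r₀ (r₀ + η), ?_, ?_⟩
    · have := hstrict r₀ (r₀ + η) le_rfl (by linarith)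
      rwa [hsm0] at this
    · intro u hu hlt
      rcases eq_or_lt_of_le hu with h | h
      · rw [← h, hrm0]; linarith
      · have := hrm_mono u _ hu hlt
        rwa [hinv₁ _ (by linarith)] at this
  have hFsmall : ∀ ε, 0 < ε → ∃ η, 0 < η ∧ ∀ r, r₀ ≤ r → r ≤ r₀ + η →
      Real.sqrt (1 + r ^ 2 - 2 * m / r) ≤ ε := by
    intro ε hε
    have hf0 : 1 + r₀ ^ 2 - 2 * m / r₀ = 0 := by
      field_simp
      linarith
    have hcont : ContinuousAt (fun r : ℝ => 1 + r ^ 2 - 2 * m / r) r₀ :=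
      (continuousAt_const.add (continuousAt_id.pow 2)).sub
        (continuousAt_const.div continuousAt_id hr₀.ne')
    rw [Metric.continuousAt_iff] at hcont
    obtain ⟨δc, hδc, hc⟩ := hcont (ε ^ 2) (by positivity)
    refine ⟨δc / 2, by linarith, ?_⟩
    intro r hr1 hr2
    have hd : dist r r₀ < δc := by
      rw [Real.dist_eq, abs_of_nonneg (by linarith)]
      linarith
    have := hc hd
    rw [Real.dist_eq, hf0, sub_zero] at this
    have hle : 1 + r ^ 2 - 2 * m / r ≤ ε ^ 2 := (le_abs_self _).trans this.le
    calc Real.sqrt (1 + r ^ 2 - 2 * m / r) ≤ Real.sqrt (ε ^ 2) := Real.sqrt_le_sqrt hle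
      _ = ε := by rw [Real.sqrt_sq hε.le]
  have hkey : ∀ ε, 0 < ε → ∃ δ, 0 < δ ∧ ∀ s, 0 < s → s < δ → rm s - r₀ ≤ ε * s := by
    intro ε hε
    obtain ⟨η, hη, hFη⟩ := hFsmall ε hε
    obtain ⟨δ, hδ, hδ'⟩ := hc0 η hη
    refine ⟨δ, hδ, ?_⟩
    intro s hs hsδ
    have hbound : ∀ t, 0 < t → t < s → rm s - rm t ≤ ε * (s - t) := by
      intro t ht hts
      have hmvt := Convex.norm_image_sub_le_of_norm_hasDerivWithin_le
        (f := rm) (f' := fun u => Real.sqrt (1 + rm u ^ 2 - 2 * m / rm u))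
        (s := Set.Icc t s)
        (fun x hx => (hmain x (ht.trans_le hx.1)).hasDerivWithinAt)
        (fun x hx => by
          have hx0 : 0 < x := ht.trans_le hx.1
          have hxδ : x < δ := lt_of_le_of_lt hx.2 hsδ
          have hrx : rm x < r₀ + η := hδ' x hx0.le hxδ
          have hge : r₀ ≤ rm x := (hinv₂ x hx0.le).1
          rw [Real.norm_eq_abs, abs_of_nonneg (Real.sqrt_nonneg _)]
          exact hFη (rm x) hge hrx.le)
        (convex_Icc t s) ⟨le_rfl, hts.le⟩ ⟨hts.le, le_rfl⟩
      have h1 : rm t ≤ rm s := (hrm_mono t s ht.le hts).le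
      rw [Real.norm_eq_abs, Real.norm_eq_abs, abs_of_nonneg (by linarith),
        abs_of_nonneg (by linarith)] at hmvt
      linarith
    have hθ : ∀ θ, 0 < θ → rm s - r₀ ≤ ε * s + θ := by
      intro θ hθ
      obtain ⟨δ₂, hδ₂, h₂⟩ := hc0 θ hθ
      set t := min (s / 2) (δ₂ / 2) with htdef
      have ht : 0 < t := lt_min (by linarith) (by linarith)
      have hts : t < s := (min_le_left _ _).trans_lt (by linarith)
      have htδ : t < δ₂ := (min_le_right _ _).trans_lt (by linarith)
      have h3 := hbound t ht hts
      have h4 : rm t < r₀ + θ := h₂ t ht.le htδ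
      have h5 : ε * (s - t) ≤ ε * s := by nlinarith
      linarith
    by_contra hcon
    push_neg at hcon
    have := hθ ((rm s - r₀ - ε * s) / 2) (by linarith)
    linarith
  rw [hasDerivWithinAt_iff_tendsto_slope]
  have hset : Set.Ici (0:ℝ) \ {0} = Set.Ioi 0 := by
    ext x
    simp only [Set.mem_diff, Set.mem_Ici, Set.mem_singleton_iff, Set.mem_Ioi]
    constructor
    · rintro ⟨h1, h2⟩; exact lt_of_le_of_ne h1 (Ne.symm h2)
    · intro h; exact ⟨h.le, ne_of_gt h⟩
  rw [hset, Metric.tendsto_nhdsWithin_nhds]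
  intro ε hε
  obtain ⟨δ, hδ, hk⟩ := hkey (ε / 2) (by linarith)
  refine ⟨δ, hδ, ?_⟩
  intro x hx hdist
  have hx0 : 0 < x := hx
  rw [Real.dist_eq, sub_zero, abs_of_pos hx0] at hdist
  have h1 := hk x hx0 hdist
  have hge : r₀ ≤ rm x := (hinv₂ x hx0.le).1
  rw [Real.dist_eq, sub_zero, slope_def_field, hrm0, sub_zero]
  have hnn : 0 ≤ (rm x - r₀) / x := div_nonneg (by linarith) hx0.le
  rw [abs_of_nonneg hnn, div_lt_iff₀ hx0]
  calc rm x - r₀ ≤ ε / 2 * x := h1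
    _ < ε * x := by nlinarith
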